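/- arXiv:2603.06747 — 3 statements merged into one kernel-verified Lean document; each statement's English description precedes it below -/
import Mathlib

section
/- Let G be a connected simple graph with at least one edge. Then AT(G) = 2 if and only if the core of G is either the one-vertex graph K1 or an even cycle C_{2m+2} for some m ≥ 1. -/
open scoped Classical

/-- The outdegree of a vertex `v` in a finite set of arcs `A`. -/
noncomputable def arcOutDeg {V : Type*} (A : Finset (V × V)) (v : V) : ℕ :=
  (A.filter fun a => a.1 = v).card

/-- The indegree of a vertex `v` in a finite set of arcs `A`. -/
noncomputable def arcInDeg {V : Type*} (A : Finset (V × V)) (v : V) : ℕ :=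
  (A.filter fun a => a.2 = v).card

/-- `A` is an orientation of the simple graph `G`: every arc of `A` joins adjacent
vertices, and every edge of `G` receives exactly one of its two possible directions. -/
def IsOrientation {V : Type*} (G : SimpleGraph V) (A : Finset (V × V)) : Prop :=
  (∀ a ∈ A, G.Adj a.1 a.2) ∧ ∀ u v : V, G.Adj u v → ((u, v) ∈ A ↔ (v, u) ∉ A)

/-- A set of arcs is Eulerian if at every vertex the indegree equals the outdegree. -/
def IsEulerianSub {V : Type*} (B : Finset (V × V)) : Prop :=
  ∀ v : V, arcInDeg B v = arcOutDeg B v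

/-- An orientation (given by its arc set `A`) is an Alon–Tarsi orientation if the number
of its even Eulerian sub-digraphs differs from the number of its odd Eulerian
sub-digraphs. -/
def IsATOrientation {V : Type*} (A : Finset (V × V)) : Prop :=
  (A.powerset.filter fun B => IsEulerianSub B ∧ Even B.card).card ≠
    (A.powerset.filter fun B => IsEulerianSub B ∧ ¬ Even B.card).card

/-- The Alon–Tarsi number of `G`: the least `k` such that `G` has an Alon–Tarsi
orientation with maximum outdegree at most `k - 1` (i.e. `< k`). -/
noncomputable def alonTarsiNumber {V : Type*} (G : SimpleGraph V) : ℕ :=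
  sInf {k : ℕ | ∃ A : Finset (V × V),
    IsOrientation G A ∧ IsATOrientation A ∧ ∀ v : V, arcOutDeg A v < k}

/-- A graph is `k`-degenerate if every nonempty (induced) subgraph has a vertex of
degree at most `k`. -/
def Degenerate {V : Type*} (k : ℕ) (G : SimpleGraph V) : Prop :=
  ∀ s : Finset V, s.Nonempty → ∃ v ∈ s, (s.filter fun u => G.Adj v u).card ≤ k

/-- The subdivision graph `S(G)`: each edge `uv` of `G` is replaced by a path `u-e-v`
through the new vertex `e` corresponding to `uv`. -/
def subdivisionGraph {V : Type*} (G : SimpleGraph V) : SimpleGraph (V ⊕ ↥G.edgeSet) :=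
  SimpleGraph.fromRel fun a b =>
    match a, b with
    | Sum.inl u, Sum.inr e => u ∈ (e : Sym2 V)
    | _, _ => False

/-- The graph `R(G)`: `G` together with, for each edge `uv`, a new vertex joined to
`u` and `v`. -/
def rGraph {V : Type*} (G : SimpleGraph V) : SimpleGraph (V ⊕ ↥G.edgeSet) :=
  SimpleGraph.fromRel fun a b =>
    match a, b with
    | Sum.inl u, Sum.inl v => G.Adj u v
    | Sum.inl u, Sum.inr e => u ∈ (e : Sym2 V)
    | _, _ => False

/-- The graph `Q(G)`: new vertices joined to the endpoints of their edges, and two new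
vertices joined iff the corresponding edges of `G` share an endpoint; original
vertices are pairwise nonadjacent. -/
def qGraph {V : Type*} (G : SimpleGraph V) : SimpleGraph (V ⊕ ↥G.edgeSet) :=
  SimpleGraph.fromRel fun a b =>
    match a, b with
    | Sum.inl u, Sum.inr e => u ∈ (e : Sym2 V)
    | Sum.inr e, Sum.inr f => e ≠ f ∧ ∃ u : V, u ∈ (e : Sym2 V) ∧ u ∈ (f : Sym2 V)
    | _, _ => False

/-- The total graph `T(G)`. -/
def tGraph {V : Type*} (G : SimpleGraph V) : SimpleGraph (V ⊕ ↥G.edgeSet) :=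
  SimpleGraph.fromRel fun a b =>
    match a, b with
    | Sum.inl u, Sum.inl v => G.Adj u v
    | Sum.inl u, Sum.inr e => u ∈ (e : Sym2 V)
    | Sum.inr e, Sum.inr f => e ≠ f ∧ ∃ u : V, u ∈ (e : Sym2 V) ∧ u ∈ (f : Sym2 V)
    | _, _ => False

/-- The `F`-sum construction: given a graph `K` on `V ⊕ E` (playing the role of `F(G)`,
whose "original" vertices are those of the form `Sum.inl u`) and a graph `H` on `W`,
two vertices `(u₁, u₂)` and `(v₁, v₂)` are adjacent iff either `u₁ = v₁` is an original
vertex and `u₂v₂ ∈ E(H)`, or `u₂ = v₂` and `u₁v₁ ∈ E(K)`. -/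
def fSum {V E W : Type*} (K : SimpleGraph (V ⊕ E)) (H : SimpleGraph W) :
    SimpleGraph ((V ⊕ E) × W) :=
  SimpleGraph.fromRel fun a b =>
    (a.1 = b.1 ∧ (∃ u : V, a.1 = Sum.inl u) ∧ H.Adj a.2 b.2) ∨
      (a.2 = b.2 ∧ K.Adj a.1 b.1)

/-- The `S`-sum `G +_S H`. -/
def sSum {V W : Type*} (G : SimpleGraph V) (H : SimpleGraph W) :
    SimpleGraph ((V ⊕ ↥G.edgeSet) × W) :=
  fSum (subdivisionGraph G) H

/-- The `R`-sum `G +_R H`. -/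
def rSum {V W : Type*} (G : SimpleGraph V) (H : SimpleGraph W) :
    SimpleGraph ((V ⊕ ↥G.edgeSet) × W) :=
  fSum (rGraph G) H

/-- The `Q`-sum `G +_Q H`. -/
def qSum {V W : Type*} (G : SimpleGraph V) (H : SimpleGraph W) :
    SimpleGraph ((V ⊕ ↥G.edgeSet) × W) :=
  fSum (qGraph G) H

/-- The `T`-sum `G +_T H`. -/
def tSum {V W : Type*} (G : SimpleGraph V) (H : SimpleGraph W) :
    SimpleGraph ((V ⊕ ↥G.edgeSet) × W) :=
  fSum (tGraph G) H

/-- The star graph `S_n = K_{1,n}`. -/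
def starGraph (n : ℕ) : SimpleGraph (Fin 1 ⊕ Fin n) :=
  completeBipartiteGraph (Fin 1) (Fin n)

/-- The vertex set of the core (2-core) of `G`: the union of all vertex sets inducing a
subgraph of minimum degree at least 2.  Repeatedly deleting vertices of degree at most 1
leaves exactly the induced subgraph on this set; for a tree this set is empty and the
core is the one-vertex graph `K₁`. -/
noncomputable def twoCoreSet {V : Type*} [Fintype V] (G : SimpleGraph V) : Finset V :=
  Finset.univ.filter fun v => ∃ S : Finset V,
    (∀ u ∈ S, 2 ≤ (S.filter fun w => G.Adj u w).card) ∧ v ∈ S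

set_option linter.unusedSectionVars false

section Aux
variable {V : Type*}

lemma arcOut_pos {A : Finset (V × V)} {u v : V} (h : (u, v) ∈ A) : 1 ≤ arcOutDeg A u :=
  Finset.card_pos.mpr ⟨(u, v), Finset.mem_filter.mpr ⟨h, rfl⟩⟩

lemma arcIn_pos {A : Finset (V × V)} {u v : V} (h : (u, v) ∈ A) : 1 ≤ arcInDeg A v :=
  Finset.card_pos.mpr ⟨(u, v), Finset.mem_filter.mpr ⟨h, rfl⟩⟩

lemma arcOut_unique {A : Finset (V × V)} {u v w : V} (hle : arcOutDeg A u ≤ 1)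
    (h1 : (u, v) ∈ A) (h2 : (u, w) ∈ A) : v = w := by
  have := Finset.card_le_one.mp hle (u, v) (Finset.mem_filter.mpr ⟨h1, rfl⟩)
    (u, w) (Finset.mem_filter.mpr ⟨h2, rfl⟩)
  exact congrArg Prod.snd this

lemma arcOut_exists {A : Finset (V × V)} {u : V} (h : 1 ≤ arcOutDeg A u) :
    ∃ v, (u, v) ∈ A := by
  obtain ⟨a, ha⟩ := Finset.card_pos.mp h
  rw [Finset.mem_filter] at ha
  exact ⟨a.2, by rw [← ha.2]; exact ha.1⟩

lemma arcIn_exists {A : Finset (V × V)} {v : V} (h : 1 ≤ arcInDeg A v) :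
    ∃ u, (u, v) ∈ A := by
  obtain ⟨a, ha⟩ := Finset.card_pos.mp h
  rw [Finset.mem_filter] at ha
  exact ⟨a.1, by rw [← ha.2]; exact ha.1⟩

lemma arcOutDeg_eq_zero {A : Finset (V × V)} {v : V} (h : ∀ a ∈ A, a.1 ≠ v) :
    arcOutDeg A v = 0 := by
  rw [arcOutDeg, Finset.card_eq_zero]
  apply Finset.eq_empty_iff_forall_notMem.mpr
  intro a ha
  rw [Finset.mem_filter] at ha
  exact h a ha.1 ha.2

lemma arcInDeg_eq_zero {A : Finset (V × V)} {v : V} (h : ∀ a ∈ A, a.2 ≠ v) :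
    arcInDeg A v = 0 := by
  rw [arcInDeg, Finset.card_eq_zero]
  apply Finset.eq_empty_iff_forall_notMem.mpr
  intro a ha
  rw [Finset.mem_filter] at ha
  exact h a ha.1 ha.2

lemma arcOutDeg_eq_one {A : Finset (V × V)} {v : V} {b : V × V}
    (h : ∀ a, (a ∈ A ∧ a.1 = v) ↔ a = b) : arcOutDeg A v = 1 := by
  rw [arcOutDeg, Finset.card_eq_one]
  refine ⟨b, ?_⟩
  ext a
  rw [Finset.mem_filter, Finset.mem_singleton]
  exact h a

lemma arcInDeg_eq_one {A : Finset (V × V)} {v : V} {b : V × V}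
    (h : ∀ a, (a ∈ A ∧ a.2 = v) ↔ a = b) : arcInDeg A v = 1 := by
  rw [arcInDeg, Finset.card_eq_one]
  refine ⟨b, ?_⟩
  ext a
  rw [Finset.mem_filter, Finset.mem_singleton]
  exact h a

lemma arcOutDeg_le_card (A : Finset (V × V)) (v : V) : arcOutDeg A v ≤ A.card :=
  Finset.card_le_card (Finset.filter_subset _ _)

lemma arcIn_unique {A : Finset (V × V)} {u v w : V} (hle : arcInDeg A v ≤ 1)
    (h1 : (u, v) ∈ A) (h2 : (w, v) ∈ A) : u = w := by
  have := Finset.card_le_one.mp hle (u, v) (Finset.mem_filter.mpr ⟨h1, rfl⟩)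
    (w, v) (Finset.mem_filter.mpr ⟨h2, rfl⟩)
  exact congrArg Prod.fst this

lemma arcOutDeg_mono {A B : Finset (V × V)} (h : A ⊆ B) (v : V) :
    arcOutDeg A v ≤ arcOutDeg B v :=
  Finset.card_le_card (Finset.filter_subset_filter _ h)

lemma sum_arcOutDeg {A : Finset (V × V)} {C : Finset V} (h : ∀ a ∈ A, a.1 ∈ C) :
    ∑ v ∈ C, arcOutDeg A v = A.card :=
  (Finset.card_eq_sum_card_fiberwise h).symm

lemma sum_arcInDeg {A : Finset (V × V)} {C : Finset V} (h : ∀ a ∈ A, a.2 ∈ C) :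
    ∑ v ∈ C, arcInDeg A v = A.card :=
  (Finset.card_eq_sum_card_fiberwise h).symm

lemma isEulerianSub_empty : IsEulerianSub (∅ : Finset (V × V)) := by
  intro v; simp [arcInDeg, arcOutDeg]

lemma arcOutDeg_union_le (A B : Finset (V × V)) (v : V) :
    arcOutDeg (A ∪ B) v ≤ arcOutDeg A v + arcOutDeg B v := by
  rw [arcOutDeg, Finset.filter_union]
  exact (Finset.card_union_le _ _).trans (by rfl)

/-- An orientation cannot contain both directions of an edge. -/
lemma IsOrientation.not_rev {G : SimpleGraph V} {A : Finset (V × V)}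
    (h : IsOrientation G A) {u v : V} (huv : (u, v) ∈ A) : (v, u) ∉ A := by
  have hadj : G.Adj u v := h.1 _ huv
  exact (h.2 u v hadj).mp huv

lemma IsOrientation.arc_of_adj {G : SimpleGraph V} {A : Finset (V × V)}
    (h : IsOrientation G A) {u v : V} (hadj : G.Adj u v) : (u, v) ∈ A ∨ (v, u) ∈ A := by
  by_cases hc : (v, u) ∈ A
  · exact Or.inr hc
  · exact Or.inl ((h.2 u v hadj).mpr hc)

/-- If the only Eulerian subdigraphs of `A` are `∅` and `D` (with `D` nonempty of even
cardinality), then `A` is an Alon-Tarsi orientation. -/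
lemma isAT_of_char {A D : Finset (V × V)} (hD : D ⊆ A) (hDne : D ≠ ∅)
    (hDeul : IsEulerianSub D) (hDeven : Even D.card)
    (hchar : ∀ B ⊆ A, IsEulerianSub B → (B = ∅ ∨ B = D)) : IsATOrientation A := by
  have he : (A.powerset.filter fun B => IsEulerianSub B ∧ Even B.card) = {∅, D} := by
    ext B
    simp only [Finset.mem_filter, Finset.mem_powerset, Finset.mem_insert,
      Finset.mem_singleton]
    constructor
    · rintro ⟨hBA, hBe, -⟩; exact hchar B hBA hBe
    · rintro (rfl | rfl)
      · exact ⟨Finset.empty_subset _, isEulerianSub_empty, by simp⟩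
      · exact ⟨hD, hDeul, hDeven⟩
  have ho : (A.powerset.filter fun B => IsEulerianSub B ∧ ¬ Even B.card) = ∅ := by
    ext B
    simp only [Finset.mem_filter, Finset.mem_powerset, Finset.notMem_empty, iff_false,
      not_and]
    rintro hBA hBe hodd
    rcases hchar B hBA hBe with rfl | rfl
    · exact hodd (by simp)
    · exact hodd hDeven
  rw [IsATOrientation, he, ho]
  rw [Finset.card_insert_of_notMem (by simpa using Ne.symm hDne), Finset.card_singleton]
  simp

/-- If the only Eulerian subdigraphs of `A` are `∅` and `D` with `D` nonempty of odd
cardinality, then `A` is not an Alon-Tarsi orientation. -/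
lemma not_isAT_of_char {A D : Finset (V × V)} (hD : D ⊆ A) (hDne : D ≠ ∅)
    (hDeul : IsEulerianSub D) (hDodd : ¬ Even D.card)
    (hchar : ∀ B ⊆ A, IsEulerianSub B → (B = ∅ ∨ B = D)) : ¬ IsATOrientation A := by
  have he : (A.powerset.filter fun B => IsEulerianSub B ∧ Even B.card) = {∅} := by
    ext B
    simp only [Finset.mem_filter, Finset.mem_powerset, Finset.mem_singleton]
    constructor
    · rintro ⟨hBA, hBe, hev⟩
      rcases hchar B hBA hBe with rfl | rfl
      · rfl
      · exact absurd hev hDodd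
    · rintro rfl
      exact ⟨Finset.empty_subset _, isEulerianSub_empty, by simp⟩
  have ho : (A.powerset.filter fun B => IsEulerianSub B ∧ ¬ Even B.card) = {D} := by
    ext B
    simp only [Finset.mem_filter, Finset.mem_powerset, Finset.mem_singleton]
    constructor
    · rintro ⟨hBA, hBe, hodd⟩
      rcases hchar B hBA hBe with rfl | rfl
      · exact absurd (by simp : Even (∅ : Finset (V × V)).card) hodd
      · rfl
    · rintro rfl
      exact ⟨hD, hDeul, hDodd⟩
  rw [IsATOrientation, he, ho]
  simp

/-- If the only Eulerian subdigraph of `A` is `∅`, then `A` is an AT orientation. -/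
lemma isAT_of_char0 {A : Finset (V × V)}
    (hchar : ∀ B ⊆ A, IsEulerianSub B → B = ∅) : IsATOrientation A := by
  have he : (A.powerset.filter fun B => IsEulerianSub B ∧ Even B.card) = {∅} := by
    ext B
    simp only [Finset.mem_filter, Finset.mem_powerset, Finset.mem_singleton]
    constructor
    · rintro ⟨hBA, hBe, -⟩; exact hchar B hBA hBe
    · rintro rfl
      exact ⟨Finset.empty_subset _, isEulerianSub_empty, by simp⟩
  have ho : (A.powerset.filter fun B => IsEulerianSub B ∧ ¬ Even B.card) = ∅ := by
    ext B
    simp only [Finset.mem_filter, Finset.mem_powerset, Finset.notMem_empty, iff_false,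
      not_and]
    rintro hBA hBe hodd
    exact hodd (hchar B hBA hBe ▸ by simp)
  rw [IsATOrientation, he, ho]
  simp

end Aux

section Support
variable {V : Type*} [Fintype V]

/-- Endpoints of arcs of a nonempty Eulerian subdigraph belong to the 2-core. -/
lemma eulerian_endpoints_mem_core {G : SimpleGraph V} {A B : Finset (V × V)}
    (hor : IsOrientation G A) (hBA : B ⊆ A) (hB : IsEulerianSub B) {a : V × V}
    (ha : a ∈ B) : a.1 ∈ twoCoreSet G ∧ a.2 ∈ twoCoreSet G := by
  set S : Finset V := B.image Prod.fst ∪ B.image Prod.snd with hS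
  have hwit : ∀ u ∈ S, 2 ≤ (S.filter fun w => G.Adj u w).card := by
    intro u hu
    have hout : 1 ≤ arcOutDeg B u := by
      rcases Finset.mem_union.mp hu with h | h
      · obtain ⟨b, hb, rfl⟩ := Finset.mem_image.mp h
        exact arcOut_pos (u := b.1) (v := b.2) hb
      · obtain ⟨b, hb, rfl⟩ := Finset.mem_image.mp h
        exact (hB b.2).symm ▸ arcIn_pos (u := b.1) (v := b.2) hb
    have hin : 1 ≤ arcInDeg B u := (hB u) ▸ hout
    obtain ⟨x, hx⟩ := arcOut_exists hout
    obtain ⟨y, hy⟩ := arcIn_exists hin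
    have hxy : x ≠ y := by
      rintro rfl
      exact hor.not_rev (hBA hx) (hBA hy)
    have hxS : x ∈ S := Finset.mem_union_right _ (Finset.mem_image.mpr ⟨(u, x), hx, rfl⟩)
    have hyS : y ∈ S := Finset.mem_union_left _ (Finset.mem_image.mpr ⟨(y, u), hy, rfl⟩)
    refine Finset.one_lt_card.mpr ⟨x, ?_, y, ?_, hxy⟩
    · exact Finset.mem_filter.mpr ⟨hxS, hor.1 _ (hBA hx)⟩
    · exact Finset.mem_filter.mpr ⟨hyS, (hor.1 _ (hBA hy)).symm⟩
  constructor
  · simp only [twoCoreSet, Finset.mem_filter, Finset.mem_univ, true_and]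
    exact ⟨S, hwit, Finset.mem_union_left _ (Finset.mem_image.mpr ⟨a, ha, rfl⟩)⟩
  · simp only [twoCoreSet, Finset.mem_filter, Finset.mem_univ, true_and]
    exact ⟨S, hwit, Finset.mem_union_right _ (Finset.mem_image.mpr ⟨a, ha, rfl⟩)⟩

/-- Peeling lemma: orient non-core edges with outdegree at most 1, sources outside `C`. -/
lemma peel_orientation (G : SimpleGraph V) (C : Finset V)
    (hpeel : ∀ s : Finset V, s.Nonempty → (∀ v ∈ s, v ∉ C) →
      ∃ v ∈ s, ((s ∪ C).filter fun w => G.Adj v w).card ≤ 1) :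
    ∀ s : Finset V, (∀ v ∈ s, v ∉ C) →
    ∃ A : Finset (V × V),
      (∀ a ∈ A, G.Adj a.1 a.2 ∧ a.1 ∈ s ∧ a.2 ∈ s ∪ C) ∧
      (∀ u v : V, G.Adj u v → (u ∈ s ∨ v ∈ s) → u ∈ s ∪ C → v ∈ s ∪ C →
        ((u, v) ∈ A ↔ (v, u) ∉ A)) ∧
      (∀ v : V, arcOutDeg A v ≤ 1) := by
  intro s
  induction s using Finset.strongInduction with
  | _ s ih =>
    intro hsC
    rcases s.eq_empty_or_nonempty with rfl | hne
    · refine ⟨∅, by simp, ?_, by intro v; simp [arcOutDeg]⟩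
      intro u v _ h; simp at h
    obtain ⟨v, hv, hdeg⟩ := hpeel s hne hsC
    have hvC : v ∉ C := hsC v hv
    obtain ⟨A', hA'1, hA'2, hA'3⟩ := ih (s.erase v) (Finset.erase_ssubset hv)
      (fun u hu => hsC u (Finset.mem_of_mem_erase hu))
    set N : Finset (V × V) :=
      ((s ∪ C).filter fun w => G.Adj v w).image fun w => (v, w) with hN
    have hmemN : ∀ a : V × V, a ∈ N ↔ a.1 = v ∧ a.2 ∈ s ∪ C ∧ G.Adj v a.2 := by
      intro a
      simp only [hN, Finset.mem_image, Finset.mem_filter]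
      constructor
      · rintro ⟨w, ⟨hw1, hw2⟩, rfl⟩; exact ⟨rfl, hw1, hw2⟩
      · rintro ⟨h1, h2, h3⟩; exact ⟨a.2, ⟨h2, h3⟩, by rw [← h1]⟩
    refine ⟨A' ∪ N, ?_, ?_, ?_⟩
    · intro a haU
      rcases Finset.mem_union.mp haU with h | h
      · obtain ⟨h1, h2, h3⟩ := hA'1 a h
        exact ⟨h1, Finset.mem_of_mem_erase h2, by
          rcases Finset.mem_union.mp h3 with h' | h'
          · exact Finset.mem_union_left _ (Finset.mem_of_mem_erase h')
          · exact Finset.mem_union_right _ h'⟩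
      · obtain ⟨h1, h2, h3⟩ := (hmemN a).mp h
        exact ⟨by rw [h1]; exact h3, by rw [h1]; exact hv, h2⟩
    · intro u w hadj hus huC hwC
      have hne_uw : u ≠ w := G.ne_of_adj hadj
      by_cases huv : u = v
      · subst huv
        have h1 : (u, w) ∈ A' ∪ N :=
          Finset.mem_union_right _ ((hmemN (u, w)).mpr ⟨rfl, hwC, hadj⟩)
        have h2 : (w, u) ∉ A' ∪ N := by
          intro hmem
          rcases Finset.mem_union.mp hmem with h | h
          · have := (hA'1 _ h).2.2
            rcases Finset.mem_union.mp this with h' | h'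
            · exact (Finset.notMem_erase u s) h'
            · exact hvC h'
          · exact hne_uw ((hmemN (w, u)).mp h).1.symm
        simp [h1, h2]
      · by_cases hwv : w = v
        · subst hwv
          have h1 : (w, u) ∈ A' ∪ N :=
            Finset.mem_union_right _ ((hmemN (w, u)).mpr ⟨rfl, huC, hadj.symm⟩)
          have h2 : (u, w) ∉ A' ∪ N := by
            intro hmem
            rcases Finset.mem_union.mp hmem with h | h
            · have := (hA'1 _ h).2.2
              rcases Finset.mem_union.mp this with h' | h'
              · exact (Finset.notMem_erase w s) h'
              · exact hvC h'
            · exact huv ((hmemN (u, w)).mp h).1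
          simp [h1, h2]
        · have hus' : u ∈ s.erase v ∨ w ∈ s.erase v := by
            rcases hus with h | h
            · exact Or.inl (Finset.mem_erase.mpr ⟨huv, h⟩)
            · exact Or.inr (Finset.mem_erase.mpr ⟨hwv, h⟩)
          have huC' : u ∈ s.erase v ∪ C := by
            rcases Finset.mem_union.mp huC with h | h
            · exact Finset.mem_union_left _ (Finset.mem_erase.mpr ⟨huv, h⟩)
            · exact Finset.mem_union_right _ h
          have hwC' : w ∈ s.erase v ∪ C := by
            rcases Finset.mem_union.mp hwC with h | h
            · exact Finset.mem_union_left _ (Finset.mem_erase.mpr ⟨hwv, h⟩)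
            · exact Finset.mem_union_right _ h
          have hiff := hA'2 u w hadj hus' huC' hwC'
          have e1 : ((u, w) ∈ A' ∪ N) ↔ (u, w) ∈ A' := by
            rw [Finset.mem_union]
            exact or_iff_left (fun h => huv ((hmemN _).mp h).1)
          have e2 : ((w, u) ∈ A' ∪ N) ↔ (w, u) ∈ A' := by
            rw [Finset.mem_union]
            exact or_iff_left (fun h => hwv ((hmemN _).mp h).1)
          rw [e1, e2]; exact hiff
    · intro u
      by_cases huv : u = v
      · subst huv
        have h0 : arcOutDeg A' u = 0 :=
          arcOutDeg_eq_zero fun a ha hfst => (Finset.notMem_erase u s) (hfst ▸ (hA'1 a ha).2.1)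
        calc arcOutDeg (A' ∪ N) u ≤ arcOutDeg A' u + arcOutDeg N u :=
              arcOutDeg_union_le _ _ _
          _ = arcOutDeg N u := by rw [h0, Nat.zero_add]
          _ ≤ 1 := le_trans (arcOutDeg_le_card _ _) ((Finset.card_image_le).trans hdeg)
      · have h0 : arcOutDeg N u = 0 :=
          arcOutDeg_eq_zero fun a ha hfst => huv (by rw [← hfst]; exact ((hmemN a).mp ha).1)
        calc arcOutDeg (A' ∪ N) u ≤ arcOutDeg A' u + arcOutDeg N u :=
              arcOutDeg_union_le _ _ _
          _ = arcOutDeg A' u := by rw [h0, Nat.add_zero]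
          _ ≤ 1 := hA'3 u

end Support

section ATtwo
variable {V : Type*} [Fintype V]

lemma at_eq_two_iff {G : SimpleGraph V} (hedge : ∃ u v : V, G.Adj u v) :
    alonTarsiNumber G = 2 ↔
      ∃ A : Finset (V × V), IsOrientation G A ∧ IsATOrientation A ∧
        ∀ v : V, arcOutDeg A v ≤ 1 := by
  have hlb : ∀ k ∈ {k : ℕ | ∃ A : Finset (V × V),
      IsOrientation G A ∧ IsATOrientation A ∧ ∀ v : V, arcOutDeg A v < k}, 2 ≤ k := by
    rintro k ⟨A, hor, -, hlt⟩
    obtain ⟨u, v, hadj⟩ := hedge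
    rcases hor.arc_of_adj hadj with h | h
    · exact lt_of_lt_of_le (lt_of_le_of_lt (arcOut_pos h) (hlt u)) (le_refl k) |>.le
        |> fun _ => le_trans (by omega : 2 ≤ 1 + 1) (by
          have := lt_of_le_of_lt (arcOut_pos h) (hlt u); omega)
    · have := lt_of_le_of_lt (arcOut_pos h) (hlt v); omega
  constructor
  · intro h
    have hne : {k : ℕ | ∃ A : Finset (V × V),
        IsOrientation G A ∧ IsATOrientation A ∧ ∀ v : V, arcOutDeg A v < k}.Nonempty := by
      by_contra hc
      rw [Set.not_nonempty_iff_eq_empty] at hc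
      rw [alonTarsiNumber, hc, Nat.sInf_empty] at h
      omega
    have := Nat.sInf_mem hne
    rw [alonTarsiNumber] at h
    rw [h] at this
    obtain ⟨A, hor, hat, hlt⟩ := this
    exact ⟨A, hor, hat, fun v => by have := hlt v; omega⟩
  · rintro ⟨A, hor, hat, hle⟩
    have h2 : 2 ∈ {k : ℕ | ∃ A : Finset (V × V),
        IsOrientation G A ∧ IsATOrientation A ∧ ∀ v : V, arcOutDeg A v < k} :=
      ⟨A, hor, hat, fun v => by have := hle v; omega⟩
    exact le_antisymm (Nat.sInf_le h2) (hlb _ (Nat.sInf_mem ⟨2, h2⟩))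

/-- Backward direction, tree case. -/
lemma backward_tree {G : SimpleGraph V} (hedge : ∃ u v : V, G.Adj u v)
    (hcore : twoCoreSet G = ∅) : alonTarsiNumber G = 2 := by
  rw [at_eq_two_iff hedge]
  have hpeel : ∀ s : Finset V, s.Nonempty → (∀ v ∈ s, v ∉ (∅ : Finset V)) →
      ∃ v ∈ s, ((s ∪ ∅).filter fun w => G.Adj v w).card ≤ 1 := by
    intro s hne _
    by_contra hc
    push_neg at hc
    obtain ⟨v, hv⟩ := hne
    have hvcore : v ∈ twoCoreSet G := by
      simp only [twoCoreSet, Finset.mem_filter, Finset.mem_univ, true_and]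
      refine ⟨s, fun u hu => ?_, hv⟩
      have := hc u hu
      rw [Finset.union_empty] at this
      omega
    rw [hcore] at hvcore
    exact absurd hvcore (Finset.notMem_empty v)
  obtain ⟨A, hA1, hA2, hA3⟩ := peel_orientation G ∅ hpeel Finset.univ (by simp)
  refine ⟨A, ⟨fun a ha => (hA1 a ha).1, fun u v hadj => ?_⟩, ?_, hA3⟩
  · exact hA2 u v hadj (Or.inl (Finset.mem_univ u)) (Finset.mem_union_left _ (Finset.mem_univ u))
      (Finset.mem_union_left _ (Finset.mem_univ v))
  · apply isAT_of_char0
    intro B hBA hBe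
    by_contra hBne
    obtain ⟨a, ha⟩ := Finset.nonempty_iff_ne_empty.mpr hBne
    have hor : IsOrientation G A := ⟨fun a ha => (hA1 a ha).1, fun u v hadj =>
      hA2 u v hadj (Or.inl (Finset.mem_univ u)) (Finset.mem_union_left _ (Finset.mem_univ u))
        (Finset.mem_union_left _ (Finset.mem_univ v))⟩
    have := (eulerian_endpoints_mem_core hor hBA hBe ha).1
    rw [hcore] at this
    exact absurd this (Finset.notMem_empty _)

end ATtwo

open Fin.CommRing Fin.NatCast

section CycleCase
variable {V : Type*} [Fintype V]

lemma fin_two_ne_zero (m : ℕ) (hm : 1 ≤ m) : (1 + 1 : Fin (2*m+2)) ≠ 0 := by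
  intro h
  have h2 := congrArg Fin.val h
  rw [Fin.val_add, Fin.val_one, Fin.val_zero, Nat.mod_eq_of_lt (by omega)] at h2
  omega

/-- Backward direction, even-cycle-core case. -/
lemma backward_cycle {G : SimpleGraph V} (hedge : ∃ u v : V, G.Adj u v) (m : ℕ)
    (hm : 1 ≤ m)
    (he : Nonempty (G.induce ↑(twoCoreSet G) ≃g SimpleGraph.cycleGraph (2*m+2))) :
    alonTarsiNumber G = 2 := by
  obtain ⟨e⟩ := he
  set C := twoCoreSet G with hCdef
  have hne2 : (1 + 1 : Fin (2*m+2)) ≠ 0 := fin_two_ne_zero m hm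
  set c : Fin (2*m+2) → V := fun i => ((e.symm i : ↥((C : Finset V) : Set V)) : V) with hcdef
  have hc_mem : ∀ i, c i ∈ C := fun i => Finset.mem_coe.mp (e.symm i).2
  have hcinj : Function.Injective c :=
    fun i j h => e.symm.toEquiv.injective (Subtype.val_injective h)
  have hadjc : ∀ i : Fin (2*m+2), G.Adj (c i) (c (i+1)) := by
    intro i
    have h1 : (SimpleGraph.cycleGraph (2*m+2)).Adj i (i+1) := by
      rw [SimpleGraph.cycleGraph_adj]
      right; ring
    exact e.symm.map_adj_iff.mpr h1
  have hvc : ∀ (v : V) (hv : v ∈ C), c (e ⟨v, Finset.mem_coe.mpr hv⟩) = v := by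
    intro v hv
    show ((e.symm (e ⟨v, Finset.mem_coe.mpr hv⟩) : ↥((C : Finset V) : Set V)) : V) = v
    rw [RelIso.symm_apply_apply]
  set D : Finset (V × V) :=
    (Finset.univ : Finset (Fin (2*m+2))).image (fun i => (c i, c (i+1))) with hDdef
  have hmemD : ∀ a : V × V, a ∈ D ↔ ∃ i, c i = a.1 ∧ c (i+1) = a.2 := by
    intro a
    simp only [hDdef, Finset.mem_image, Finset.mem_univ, true_and]
    constructor
    · rintro ⟨i, h⟩
      exact ⟨i, by rw [← h], by rw [← h]⟩
    · rintro ⟨i, h1, h2⟩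
      refine ⟨i, ?_⟩
      obtain ⟨a1, a2⟩ := a
      simp only [Prod.mk.injEq]
      exact ⟨h1, h2⟩
  have hDboth : ∀ a ∈ D, a.1 ∈ C ∧ a.2 ∈ C ∧ G.Adj a.1 a.2 := by
    intro a ha
    obtain ⟨i, h1, h2⟩ := (hmemD a).mp ha
    exact ⟨h1 ▸ hc_mem i, h2 ▸ hc_mem (i+1), h1 ▸ h2 ▸ hadjc i⟩
  have hDor : ∀ u v : V, u ∈ C → v ∈ C → G.Adj u v → ((u, v) ∈ D ↔ (v, u) ∉ D) := by
    intro u v hu hv hadj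
    set i := e ⟨u, Finset.mem_coe.mpr hu⟩ with hi
    set j := e ⟨v, Finset.mem_coe.mpr hv⟩ with hj
    have hci : c i = u := hvc u hu
    have hcj : c j = v := hvc v hv
    have hcycadj : (SimpleGraph.cycleGraph (2*m+2)).Adj i j := by
      apply e.map_adj_iff.mpr
      exact hadj
    have hmem1 : (u, v) ∈ D ↔ j = i + 1 := by
      rw [hmemD]
      constructor
      · rintro ⟨k, hk1, hk2⟩
        dsimp only at hk1 hk2
        have hki : k = i := hcinj (by rw [hk1, hci])
        exact hcinj (by rw [hcj, ← hk2, hki])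
      · intro h
        exact ⟨i, hci, by rw [← h, hcj]⟩
    have hmem2 : (v, u) ∈ D ↔ i = j + 1 := by
      rw [hmemD]
      constructor
      · rintro ⟨k, hk1, hk2⟩
        dsimp only at hk1 hk2
        have hkj : k = j := hcinj (by rw [hk1, hcj])
        exact hcinj (by rw [hci, ← hk2, hkj])
      · intro h
        exact ⟨j, hcj, by rw [← h, hci]⟩
    have hone : i = j + 1 ∨ j = i + 1 := by
      rw [SimpleGraph.cycleGraph_adj] at hcycadj
      rcases hcycadj with h | h
      · exact Or.inl (by linear_combination h)
      · exact Or.inr (by linear_combination h)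
    have hnotboth : ¬(j = i + 1 ∧ i = j + 1) := by
      rintro ⟨h1, h2⟩
      apply hne2
      apply (left_eq_add (a := i)).mp
      calc i = j + 1 := h2
        _ = (i + 1) + 1 := by rw [h1]
        _ = i + (1 + 1) := by ring
    rw [hmem1, hmem2]
    constructor
    · intro h1 h2
      exact hnotboth ⟨h1, h2⟩
    · intro h2
      rcases hone with h | h
      · exact absurd h h2
      · exact h
  have hDoutC : ∀ v ∈ C, arcOutDeg D v = 1 := by
    intro v hv
    apply arcOutDeg_eq_one (b := (v, c (e ⟨v, Finset.mem_coe.mpr hv⟩ + 1)))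
    intro a
    constructor
    · rintro ⟨haD, ha1⟩
      obtain ⟨k, hk1, hk2⟩ := (hmemD a).mp haD
      obtain ⟨a1, a2⟩ := a
      dsimp only at hk1 hk2 ha1
      have hki : k = e ⟨v, Finset.mem_coe.mpr hv⟩ := hcinj (by rw [hk1, ha1, hvc v hv])
      simp only [Prod.mk.injEq]
      exact ⟨ha1, by rw [← hk2, hki]⟩
    · rintro rfl
      refine ⟨(hmemD _).mpr ⟨e ⟨v, Finset.mem_coe.mpr hv⟩, hvc v hv, rfl⟩, rfl⟩
  have hDout0 : ∀ v, v ∉ C → arcOutDeg D v = 0 := by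
    intro v hv
    exact arcOutDeg_eq_zero fun a ha hfst => hv (hfst ▸ (hDboth a ha).1)
  have hDinC : ∀ v ∈ C, arcInDeg D v = 1 := by
    intro v hv
    apply arcInDeg_eq_one (b := (c (e ⟨v, Finset.mem_coe.mpr hv⟩ - 1), v))
    intro a
    constructor
    · rintro ⟨haD, ha2⟩
      obtain ⟨k, hk1, hk2⟩ := (hmemD a).mp haD
      obtain ⟨a1, a2⟩ := a
      dsimp only at hk1 hk2 ha2
      have hki : k + 1 = e ⟨v, Finset.mem_coe.mpr hv⟩ := hcinj (by rw [hk2, ha2, hvc v hv])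
      have hk : k = e ⟨v, Finset.mem_coe.mpr hv⟩ - 1 := by rw [← hki]; ring
      simp only [Prod.mk.injEq]
      exact ⟨by rw [← hk1, hk], ha2⟩
    · rintro rfl
      refine ⟨(hmemD _).mpr ⟨e ⟨v, Finset.mem_coe.mpr hv⟩ - 1, rfl, ?_⟩, rfl⟩
      rw [sub_add_cancel]
      exact hvc v hv
  have hDeul : IsEulerianSub D := by
    intro v
    by_cases hv : v ∈ C
    · rw [hDoutC v hv, hDinC v hv]
    · rw [hDout0 v hv]
      exact arcInDeg_eq_zero fun a ha hsnd => hv (hsnd ▸ (hDboth a ha).2.1)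
  have hDcard : D.card = 2*m+2 := by
    rw [hDdef, Finset.card_image_of_injective _
      (fun i j h => hcinj (congrArg Prod.fst h))]
    simp
  have hchaseD : ∀ B ⊆ D, IsEulerianSub B → B.Nonempty → B = D := by
    intro B hBD hBe hBne
    obtain ⟨a, ha⟩ := hBne
    obtain ⟨i, hi1, hi2⟩ := (hmemD a).mp (hBD ha)
    have hbase : (c i, c (i+1)) ∈ B := by
      have h : a = (c i, c (i+1)) := by
        obtain ⟨a1, a2⟩ := a
        simp only [Prod.mk.injEq]
        exact ⟨hi1.symm, hi2.symm⟩
      rw [← h]; exact ha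
    have claim : ∀ k : ℕ, (c (i + (k : Fin (2*m+2))), c (i + (k : Fin (2*m+2)) + 1)) ∈ B := by
      intro k
      induction k with
      | zero => simpa using hbase
      | succ k ih =>
        have hin : 1 ≤ arcInDeg B (c (i + (k : Fin (2*m+2)) + 1)) := arcIn_pos ih
        have hout : 1 ≤ arcOutDeg B (c (i + (k : Fin (2*m+2)) + 1)) := (hBe _) ▸ hin
        obtain ⟨x, hx⟩ := arcOut_exists hout
        obtain ⟨k', h1, h2⟩ := (hmemD _).mp (hBD hx)
        dsimp only at h1 h2
        have hk' : k' = i + (k : Fin (2*m+2)) + 1 := hcinj h1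
        have hxe : x = c (i + (k : Fin (2*m+2)) + 1 + 1) := by rw [← h2, hk']
        rw [hxe] at hx
        have hcast : (((k+1 : ℕ)) : Fin (2*m+2)) = (k : Fin (2*m+2)) + 1 := by
          push_cast; ring
        rw [hcast, ← add_assoc]
        exact hx
    have hsub : D ⊆ B := by
      intro b hb
      obtain ⟨j, hj1, hj2⟩ := (hmemD b).mp hb
      have hji : i + (((j - i).val : ℕ) : Fin (2*m+2)) = j := by
        rw [Fin.cast_val_eq_self]; ring
      have := claim (j - i).val
      rw [hji] at this
      have hbeq : b = (c j, c (j+1)) := by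
        obtain ⟨b1, b2⟩ := b
        simp only [Prod.mk.injEq]
        exact ⟨hj1.symm, hj2.symm⟩
      rw [hbeq]; exact this
    exact Finset.Subset.antisymm hBD hsub
  -- the two-core has min degree 2 within itself
  have hC2 : ∀ v ∈ C, 2 ≤ (C.filter fun w => G.Adj v w).card := by
    intro v hv
    set i0 := e ⟨v, Finset.mem_coe.mpr hv⟩ with hi0
    have hx : G.Adj v (c (i0 + 1)) := by
      have := hadjc i0
      rwa [hvc v hv] at this
    have hy : G.Adj v (c (i0 - 1)) := by
      have := hadjc (i0 - 1)
      rw [sub_add_cancel] at this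
      rw [hvc v hv] at this
      exact this.symm
    have hxy : c (i0 + 1) ≠ c (i0 - 1) := by
      intro h
      have h2 := hcinj h
      exact hne2 (by linear_combination h2)
    refine Finset.one_lt_card.mpr ⟨c (i0 + 1), ?_, c (i0 - 1), ?_, hxy⟩
    · exact Finset.mem_filter.mpr ⟨hc_mem _, hx⟩
    · exact Finset.mem_filter.mpr ⟨hc_mem _, hy⟩
  -- peel the rest of the graph
  have hpeel : ∀ s : Finset V, s.Nonempty → (∀ v ∈ s, v ∉ C) →
      ∃ v ∈ s, ((s ∪ C).filter fun w => G.Adj v w).card ≤ 1 := by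
    intro s hne hsC
    by_contra hc
    push_neg at hc
    obtain ⟨v, hv⟩ := hne
    have hvcore : v ∈ twoCoreSet G := by
      simp only [twoCoreSet, Finset.mem_filter, Finset.mem_univ, true_and]
      refine ⟨s ∪ C, fun u hu => ?_, Finset.mem_union_left _ hv⟩
      rcases Finset.mem_union.mp hu with h | h
      · have := hc u h; omega
      · exact le_trans (hC2 u h)
          (Finset.card_le_card (Finset.filter_subset_filter _ (Finset.subset_union_right)))
    exact (hsC v hv) hvcore
  obtain ⟨AT, hA1, hA2, hA3⟩ := peel_orientation G C hpeel (Finset.univ \ C)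
    (fun v hv => (Finset.mem_sdiff.mp hv).2)
  set A : Finset (V × V) := AT ∪ D with hAdef
  have hATnotC : ∀ a ∈ AT, a.1 ∉ C := fun a ha => (Finset.mem_sdiff.mp (hA1 a ha).2.1).2
  have hmemsC : ∀ u : V, u ∈ Finset.univ \ C ∪ C := by
    intro u
    by_cases h : u ∈ C
    · exact Finset.mem_union_right _ h
    · exact Finset.mem_union_left _ (Finset.mem_sdiff.mpr ⟨Finset.mem_univ _, h⟩)
  have hor : IsOrientation G A := by
    constructor
    · intro a ha
      rcases Finset.mem_union.mp ha with h | h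
      · exact (hA1 a h).1
      · exact (hDboth a h).2.2
    · intro u v hadj
      by_cases huC : u ∈ C
      · by_cases hvC : v ∈ C
        · have h1 : (u, v) ∉ AT := fun h => (hATnotC _ h) huC
          have h2 : (v, u) ∉ AT := fun h => (hATnotC _ h) hvC
          have hiff := hDor u v huC hvC hadj
          constructor
          · intro hmem hmem'
            rcases Finset.mem_union.mp hmem with h | h
            · exact h1 h
            · rcases Finset.mem_union.mp hmem' with h' | h'
              · exact h2 h'
              · exact (hiff.mp h) h'
          · intro hnmem
            apply Finset.mem_union_right
            apply hiff.mpr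
            intro h
            exact hnmem (Finset.mem_union_right _ h)
        · have h1 : (u, v) ∉ D := fun h => hvC (hDboth _ h).2.1
          have h2 : (v, u) ∉ D := fun h => hvC (hDboth _ h).1
          have hiff := hA2 u v hadj
            (Or.inr (Finset.mem_sdiff.mpr ⟨Finset.mem_univ _, hvC⟩)) (hmemsC u) (hmemsC v)
          constructor
          · intro hmem hmem'
            rcases Finset.mem_union.mp hmem with h | h
            · rcases Finset.mem_union.mp hmem' with h' | h'
              · exact (hiff.mp h) h'
              · exact h2 h'
            · exact h1 h
          · intro hnmem
            apply Finset.mem_union_left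
            apply hiff.mpr
            intro h
            exact hnmem (Finset.mem_union_left _ h)
      · have h1 : (u, v) ∉ D := fun h => huC (hDboth _ h).1
        have h2 : (v, u) ∉ D := fun h => huC (hDboth _ h).2.1
        have hiff := hA2 u v hadj
          (Or.inl (Finset.mem_sdiff.mpr ⟨Finset.mem_univ _, huC⟩)) (hmemsC u) (hmemsC v)
        constructor
        · intro hmem hmem'
          rcases Finset.mem_union.mp hmem with h | h
          · rcases Finset.mem_union.mp hmem' with h' | h'
            · exact (hiff.mp h) h'
            · exact h2 h'
          · exact h1 h
        · intro hnmem
          apply Finset.mem_union_left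
          apply hiff.mpr
          intro h
          exact hnmem (Finset.mem_union_left _ h)
  have houtle : ∀ v : V, arcOutDeg A v ≤ 1 := by
    intro v
    by_cases hv : v ∈ C
    · have h0 : arcOutDeg AT v = 0 :=
        arcOutDeg_eq_zero fun a ha hfst => (hATnotC a ha) (hfst ▸ hv)
      calc arcOutDeg A v ≤ arcOutDeg AT v + arcOutDeg D v := arcOutDeg_union_le _ _ _
        _ = 1 := by rw [h0, hDoutC v hv]
    · have h0 : arcOutDeg D v = 0 := hDout0 v hv
      calc arcOutDeg A v ≤ arcOutDeg AT v + arcOutDeg D v := arcOutDeg_union_le _ _ _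
        _ ≤ 1 := by rw [h0, Nat.add_zero]; exact hA3 v
  have hat : IsATOrientation A := by
    apply isAT_of_char (D := D) Finset.subset_union_right
    · intro h
      rw [h] at hDcard
      simp at hDcard
    · exact hDeul
    · rw [hDcard]; exact ⟨m+1, by ring⟩
    · intro B hBA hBe
      rcases B.eq_empty_or_nonempty with h | h
      · exact Or.inl h
      · refine Or.inr (hchaseD B ?_ hBe h)
        intro a haB
        have hcore := (eulerian_endpoints_mem_core hor hBA hBe haB).1
        rcases Finset.mem_union.mp (hBA haB) with hmem | hmem
        · exact absurd hcore (hATnotC a hmem)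
        · exact hmem
  rw [at_eq_two_iff hedge]
  exact ⟨A, hor, hat, houtle⟩

end CycleCase

section Forward
variable {V : Type*} [Fintype V]

set_option maxHeartbeats 1000000 in
/-- Forward direction: an AT orientation with max outdegree 1 on a connected graph
with nonempty 2-core forces the core to induce an even cycle. -/
lemma forward_cycle {G : SimpleGraph V} {A : Finset (V × V)} (hconn : G.Connected)
    (hA : IsOrientation G A) (hat : IsATOrientation A)
    (houtle : ∀ v : V, arcOutDeg A v ≤ 1) (hCne : (twoCoreSet G).Nonempty) :
    ∃ m : ℕ, 1 ≤ m ∧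
      Nonempty (G.induce ↑(twoCoreSet G) ≃g SimpleGraph.cycleGraph (2 * m + 2)) := by
  classical
  set C := twoCoreSet G with hCdef
  have hC2 : ∀ v ∈ C, 2 ≤ (C.filter fun w => G.Adj v w).card := by
    intro v hv
    rw [hCdef, twoCoreSet, Finset.mem_filter] at hv
    obtain ⟨-, S, hS, hvS⟩ := hv
    have hSC : S ⊆ C := by
      intro u hu
      rw [hCdef, twoCoreSet, Finset.mem_filter]
      exact ⟨Finset.mem_univ _, S, hS, hu⟩
    exact le_trans (hS v hvS)
      (Finset.card_le_card (Finset.filter_subset_filter _ hSC))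
  set AC : Finset (V × V) := A.filter (fun a => a.1 ∈ C ∧ a.2 ∈ C) with hACdef
  have hACsub : AC ⊆ A := Finset.filter_subset _ _
  have hACmem : ∀ u w : V, ((u, w) ∈ AC ↔ (u, w) ∈ A ∧ u ∈ C ∧ w ∈ C) := by
    intro u w
    rw [hACdef, Finset.mem_filter]
  have hACmem' : ∀ a ∈ AC, a ∈ A ∧ a.1 ∈ C ∧ a.2 ∈ C := by
    intro a ha
    rw [hACdef, Finset.mem_filter] at ha
    exact ⟨ha.1, ha.2.1, ha.2.2⟩
  -- degree identity on the core
  have hdegsum : ∀ v ∈ C, (C.filter fun w => G.Adj v w).card =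
      arcInDeg AC v + arcOutDeg AC v := by
    intro v hv
    have hsplit : arcInDeg AC v + arcOutDeg AC v =
        (AC.filter fun a => a.1 = v ∨ a.2 = v).card := by
      rw [arcInDeg, arcOutDeg]
      rw [← Finset.card_union_of_disjoint]
      · congr 1
        ext a
        simp only [Finset.mem_union, Finset.mem_filter]
        tauto
      · rw [Finset.disjoint_left]
        intro a ha hb
        rw [Finset.mem_filter] at ha hb
        have hadj := hA.1 a (hACsub ha.1)
        rw [hb.2, ha.2] at hadj
        exact (G.ne_of_adj hadj) rfl
    rw [hsplit]
    apply Finset.card_bij (fun u _ => if (v, u) ∈ A then (v, u) else (u, v))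
    · intro u hu
      rw [Finset.mem_filter] at hu
      have hadj : G.Adj v u := hu.2
      rcases hA.arc_of_adj hadj with h | h
      · rw [if_pos h, Finset.mem_filter]
        exact ⟨(hACmem v u).mpr ⟨h, hv, hu.1⟩, Or.inl rfl⟩
      · have hnot : (v, u) ∉ A := hA.not_rev h
        rw [if_neg hnot, Finset.mem_filter]
        exact ⟨(hACmem u v).mpr ⟨h, hu.1, hv⟩, Or.inr rfl⟩
    · intro u1 h1 u2 h2 heq
      rw [Finset.mem_filter] at h1 h2
      have hn1 : u1 ≠ v := fun h => (G.ne_of_adj h1.2) h.symm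
      have hn2 : u2 ≠ v := fun h => (G.ne_of_adj h2.2) h.symm
      by_cases c1 : (v, u1) ∈ A <;> by_cases c2 : (v, u2) ∈ A
      · rw [if_pos c1, if_pos c2] at heq
        exact congrArg Prod.snd heq
      · rw [if_pos c1, if_neg c2] at heq
        exact absurd (congrArg Prod.fst heq).symm hn2
      · rw [if_neg c1, if_pos c2] at heq
        exact absurd (congrArg Prod.fst heq) hn1
      · rw [if_neg c1, if_neg c2] at heq
        exact congrArg Prod.fst heq
    · rintro ⟨b1, b2⟩ hb
      rw [Finset.mem_filter] at hb
      obtain ⟨hbAC, hb12⟩ := hb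
      obtain ⟨hbA, hb1C, hb2C⟩ := hACmem' _ hbAC
      have hadjb : G.Adj b1 b2 := hA.1 _ hbA
      rcases hb12 with h | h
      · dsimp only at h hb1C hb2C
        subst h
        refine ⟨b2, Finset.mem_filter.mpr ⟨hb2C, hadjb⟩, ?_⟩
        rw [if_pos hbA]
      · dsimp only at h hb1C hb2C
        subst h
        refine ⟨b1, Finset.mem_filter.mpr ⟨hb1C, hadjb.symm⟩, ?_⟩
        rw [if_neg (hA.not_rev hbA)]
  have hsumout : ∑ v ∈ C, arcOutDeg AC v = AC.card :=
    sum_arcOutDeg (fun a ha => (hACmem' a ha).2.1)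
  have hsumin : ∑ v ∈ C, arcInDeg AC v = AC.card :=
    sum_arcInDeg (fun a ha => (hACmem' a ha).2.2)
  have houtle' : ∀ v : V, arcOutDeg AC v ≤ 1 :=
    fun v => le_trans (arcOutDeg_mono hACsub v) (houtle v)
  have hcardle : AC.card ≤ C.card := by
    rw [← hsumout]
    calc ∑ v ∈ C, arcOutDeg AC v ≤ ∑ _v ∈ C, 1 :=
          Finset.sum_le_sum (fun v _ => houtle' v)
      _ = C.card := by simp
  have hcardge : C.card ≤ AC.card := by
    have h2 : 2 * C.card ≤ 2 * AC.card := by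
      calc 2 * C.card = ∑ _v ∈ C, 2 := by simp [Nat.mul_comm]
        _ ≤ ∑ v ∈ C, (C.filter fun w => G.Adj v w).card :=
            Finset.sum_le_sum (fun v hv => hC2 v hv)
        _ = ∑ v ∈ C, (arcInDeg AC v + arcOutDeg AC v) :=
            Finset.sum_congr rfl (fun v hv => hdegsum v hv)
        _ = AC.card + AC.card := by rw [Finset.sum_add_distrib, hsumin, hsumout]
        _ = 2 * AC.card := by ring
    omega
  have hcardeq : AC.card = C.card := le_antisymm hcardle hcardge
  -- every core vertex has out- and in-degree exactly 1 within the core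
  have houtC1 : ∀ v ∈ C, arcOutDeg AC v = 1 := by
    intro v hv
    by_contra hne1
    have hv0 : arcOutDeg AC v = 0 := by have := houtle' v; omega
    have : ∑ v ∈ C, arcOutDeg AC v < ∑ _v ∈ C, 1 := by
      apply Finset.sum_lt_sum (fun u _ => houtle' u) ⟨v, hv, by omega⟩
    rw [hsumout, hcardeq] at this
    simp at this
  have hinge1 : ∀ v ∈ C, 1 ≤ arcInDeg AC v := by
    intro v hv
    have h1 := hdegsum v hv
    have h2 := hC2 v hv
    have h3 := houtle' v
    omega
  have hinC1 : ∀ v ∈ C, arcInDeg AC v = 1 := by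
    intro v hv
    by_contra hne1
    have hv2 : 2 ≤ arcInDeg AC v := by have := hinge1 v hv; omega
    have : ∑ _v ∈ C, 1 < ∑ v ∈ C, arcInDeg AC v := by
      apply Finset.sum_lt_sum (fun u hu => hinge1 u hu) ⟨v, hv, by omega⟩
    rw [hsumin, hcardeq] at this
    simp at this
  -- the successor function
  set g : V → V := fun v => if h : ∃ u, (v, u) ∈ A then h.choose else v with hgdef
  have hg_arc : ∀ v u : V, (v, u) ∈ A → g v = u := by
    intro v u h
    have hex : ∃ u, (v, u) ∈ A := ⟨u, h⟩
    have : g v = hex.choose := by rw [hgdef]; exact dif_pos hex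
    rw [this]
    exact arcOut_unique (houtle v) hex.choose_spec h
  have hgC : ∀ v ∈ C, (v, g v) ∈ AC ∧ g v ∈ C := by
    intro v hv
    have h1 : 1 ≤ arcOutDeg AC v := by rw [houtC1 v hv]
    obtain ⟨u, hu⟩ := arcOut_exists h1
    obtain ⟨huA, -, huC⟩ := hACmem' _ hu
    have := hg_arc v u huA
    rw [this]
    exact ⟨hu, huC⟩
  have hgInjC : ∀ u ∈ C, ∀ w ∈ C, g u = g w → u = w := by
    intro u hu w hw heq
    have h1 := (hgC u hu).1
    have h2 := (hgC w hw).1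
    rw [heq] at h1
    have hin : arcInDeg AC (g w) ≤ 1 := by rw [hinC1 _ (hgC w hw).2]
    exact arcIn_unique hin h1 h2
  have hadj_g : ∀ u v : V, G.Adj u v → g u = v ∨ g v = u := by
    intro u v hadj
    rcases hA.arc_of_adj hadj with h | h
    · exact Or.inl (hg_arc u v h)
    · exact Or.inr (hg_arc v u h)
  -- orbit relation, constant on connected graphs
  set R : V → V → Prop := fun u v => ∃ i j : ℕ, g^[i] u = g^[j] v with hRdef
  have hRtrans : ∀ u v w : V, R u v → R v w → R u w := by
    rintro u v w ⟨i, j, hij⟩ ⟨i', j', hij'⟩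
    refine ⟨i' + i, j + j', ?_⟩
    rw [Function.iterate_add_apply, hij, ← Function.iterate_add_apply,
      Nat.add_comm i' j, Function.iterate_add_apply, hij',
      ← Function.iterate_add_apply]
  have hRall : ∀ u v : V, R u v := by
    intro u v
    obtain ⟨p⟩ := hconn.preconnected u v
    induction p with
    | nil => exact ⟨0, 0, rfl⟩
    | cons h q ih =>
      refine hRtrans _ _ _ ?_ ih
      rcases hadj_g _ _ h with h' | h'
      · exact ⟨1, 0, h'⟩
      · exact ⟨0, 1, h'.symm⟩
  have hCiter : ∀ v ∈ C, ∀ k : ℕ, g^[k] v ∈ C := by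
    intro v hv k
    induction k with
    | zero => exact hv
    | succ k ih =>
      rw [Function.iterate_succ_apply']
      exact (hgC _ ih).2
  have hcancel : ∀ i : ℕ, ∀ u ∈ C, ∀ w ∈ C, g^[i] u = g^[i] w → u = w := by
    intro i
    induction i with
    | zero => intro u _ w _ h; exact h
    | succ i ih =>
      intro u hu w hw h
      rw [Function.iterate_succ_apply', Function.iterate_succ_apply'] at h
      exact ih u hu w hw (hgInjC _ (hCiter u hu i) _ (hCiter w hw i) h)
  have hper : ∀ w ∈ C, ∃ p : ℕ, 0 < p ∧ g^[p] w = w := by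
    intro w hw
    obtain ⟨i, j, hne, heq⟩ := Finite.exists_ne_map_eq_of_infinite (fun k : ℕ => g^[k] w)
    rcases Nat.lt_or_ge i j with hlt | hge
    · refine ⟨j - i, by omega, ?_⟩
      have : g^[i] (g^[j-i] w) = g^[i] w := by
        rw [← Function.iterate_add_apply]
        have : i + (j - i) = j := by omega
        rw [this]
        exact heq.symm
      exact hcancel i _ (hCiter w hw _) w hw this
    · have hlt : j < i := by omega
      refine ⟨i - j, by omega, ?_⟩
      have : g^[j] (g^[i-j] w) = g^[j] w := by
        rw [← Function.iterate_add_apply]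
        have : j + (i - j) = i := by omega
        rw [this]
        exact heq
      exact hcancel j _ (hCiter w hw _) w hw this
  obtain ⟨v0, hv0⟩ := hCne
  have hv0C : v0 ∈ C := hv0
  -- minimal period L
  have hexP : ∃ p : ℕ, 0 < p ∧ g^[p] v0 = v0 := hper v0 hv0C
  set L : ℕ := Nat.find hexP with hLdef
  obtain ⟨hL0, hLper⟩ : 0 < L ∧ g^[L] v0 = v0 := Nat.find_spec hexP
  have hLmin : ∀ q : ℕ, 0 < q → q < L → g^[q] v0 ≠ v0 := by
    intro q hq hqL hqe
    exact Nat.find_min hexP hqL ⟨hq, hqe⟩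
  have hinj_lt : ∀ i j : ℕ, i < L → j < L → g^[i] v0 = g^[j] v0 → i = j := by
    have key : ∀ i j : ℕ, i ≤ j → j < L → g^[i] v0 = g^[j] v0 → i = j := by
      intro i j hle hjL heq
      have h1 : g^[i] (g^[j-i] v0) = g^[i] v0 := by
        rw [← Function.iterate_add_apply]
        have : i + (j - i) = j := by omega
        rw [this]
        exact heq.symm
      have h2 : g^[j-i] v0 = v0 := hcancel i _ (hCiter v0 hv0C _) v0 hv0C h1
      rcases Nat.eq_zero_or_pos (j - i) with h | h
      · omega
      · exact absurd h2 (hLmin _ h (by omega))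
    intro i j hiL hjL heq
    rcases le_or_gt i j with h | h
    · exact key i j h hjL heq
    · exact (key j i (by omega) hiL heq.symm).symm
  have hmul : ∀ w ∈ C, ∀ p : ℕ, g^[p] w = w → ∀ s : ℕ, g^[p*s] w = w := by
    intro w _ p hp s
    induction s with
    | zero => simp
    | succ s ih =>
      have : p * (s + 1) = p * s + p := by ring
      rw [this, Function.iterate_add_apply, hp, ih]
  have hmod : ∀ k : ℕ, g^[k] v0 = g^[k % L] v0 := by
    intro k
    conv_lhs => rw [← Nat.mod_add_div k L]
    rw [Function.iterate_add_apply]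
    rw [hmul v0 hv0C L hLper (k / L)]
  have horbit : ∀ w ∈ C, ∃ k : ℕ, k < L ∧ g^[k] v0 = w := by
    intro w hw
    obtain ⟨i, j, hij⟩ := hRall v0 w
    obtain ⟨p, hp0, hp⟩ := hper w hw
    have hd : j ≤ p * (j + 1) := by nlinarith
    set d := p * (j + 1) - j with hddef
    have hw1 : g^[d + j] w = w := by
      have : d + j = p * (j + 1) := by omega
      rw [this]
      exact hmul w hw p hp (j + 1)
    have hw2 : g^[d + i] v0 = w := by
      rw [Function.iterate_add_apply, hij, ← Function.iterate_add_apply]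
      exact hw1
    refine ⟨(d + i) % L, Nat.mod_lt _ hL0, ?_⟩
    rw [← hmod]
    exact hw2
  -- L is at least 3
  have hL3 : 3 ≤ L := by
    have h1 : L ≠ 1 := by
      intro h
      have hg1 : g v0 = v0 := by
        have := hLper
        rw [h] at this
        simpa using this
      have harc := (hgC v0 hv0C).1
      rw [hg1] at harc
      exact (G.ne_of_adj (hA.1 _ (hACsub harc))) rfl
    have h2 : L ≠ 2 := by
      intro h
      have hg2 : g (g v0) = v0 := by
        have := hLper
        rw [h] at this
        simpa [Function.iterate_succ_apply'] using this
      have harc1 := (hgC v0 hv0C).1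
      have harc2 := (hgC (g v0) (hgC v0 hv0C).2).1
      rw [hg2] at harc2
      exact hA.not_rev (hACsub harc1) (hACsub harc2)
    omega
  -- characterization of core arcs
  have hACchar : ∀ u w : V, ((u, w) ∈ AC ↔ u ∈ C ∧ w = g u) := by
    intro u w
    constructor
    · intro h
      obtain ⟨hmem, huC, -⟩ := hACmem' _ h
      exact ⟨huC, (hg_arc u w hmem).symm⟩
    · rintro ⟨huC, rfl⟩
      exact (hgC u huC).1
  -- characterization of Eulerian subdigraphs
  have hchar : ∀ B ⊆ A, IsEulerianSub B → B = ∅ ∨ B = AC := by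
    intro B hBA hBe
    rcases B.eq_empty_or_nonempty with h | hBne
    · exact Or.inl h
    refine Or.inr ?_
    have hBsub : B ⊆ AC := by
      intro a ha
      have hcore := eulerian_endpoints_mem_core hA hBA hBe ha
      rw [hACdef, Finset.mem_filter]
      exact ⟨hBA ha, hcore.1, hcore.2⟩
    obtain ⟨a, ha⟩ := hBne
    obtain ⟨u0, w0⟩ := a
    obtain ⟨hu0C, hw0⟩ := (hACchar u0 w0).mp (hBsub ha)
    subst hw0
    have hclaim : ∀ k : ℕ, (g^[k] u0, g^[k+1] u0) ∈ B := by
      intro k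
      induction k with
      | zero => simpa using ha
      | succ k ih =>
        have hin : 1 ≤ arcInDeg B (g^[k+1] u0) := arcIn_pos ih
        have hout : 1 ≤ arcOutDeg B (g^[k+1] u0) := (hBe _) ▸ hin
        obtain ⟨x, hx⟩ := arcOut_exists hout
        have hxg : x = g (g^[k+1] u0) := (hg_arc _ _ (hBA hx)).symm
        rw [hxg, ← Function.iterate_succ_apply' g (k+1)] at hx
        exact hx
    have hACsubB : AC ⊆ B := by
      intro b hb
      obtain ⟨w, z⟩ := b
      obtain ⟨hwC, hz⟩ := (hACchar w z).mp hb
      subst hz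
      obtain ⟨k', hk'L, hk'⟩ := horbit w hwC
      obtain ⟨k0, hk0L, hk0⟩ := horbit u0 hu0C
      set a := k' + L - k0 with hadef
      have hau : g^[a] u0 = w := by
        rw [← hk0, ← Function.iterate_add_apply]
        have : a + k0 = k' + L := by omega
        rw [this, Function.iterate_add_apply, hLper]
        exact hk'
      have := hclaim a
      rw [hau] at this
      rw [Function.iterate_succ_apply', hau] at this
      exact this
    exact Finset.Subset.antisymm hBsub hACsubB
  have hACeul : IsEulerianSub AC := by
    intro v
    by_cases hv : v ∈ C
    · rw [hinC1 v hv, houtC1 v hv]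
    · rw [arcOutDeg_eq_zero (fun a ha hfst => hv (by rw [← hfst]; exact (hACmem' a ha).2.1)),
        arcInDeg_eq_zero (fun a ha hsnd => hv (by rw [← hsnd]; exact (hACmem' a ha).2.2))]
  have hACne : AC ≠ ∅ := Finset.ne_empty_of_mem (hgC v0 hv0C).1
  -- the core is exactly the orbit of v0
  have hCim : C = (Finset.range L).image (fun k => g^[k] v0) := by
    ext w
    simp only [Finset.mem_image, Finset.mem_range]
    constructor
    · intro hw
      obtain ⟨k, hk, hke⟩ := horbit w hw
      exact ⟨k, hk, hke⟩
    · rintro ⟨k, -, rfl⟩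
      exact hCiter v0 hv0C k
  have hCcardL : C.card = L := by
    rw [hCim, Finset.card_image_of_injOn, Finset.card_range]
    intro i hi j hj hij
    rw [Finset.mem_coe, Finset.mem_range] at hi hj
    exact hinj_lt i j hi hj hij
  have hACcardL : AC.card = L := hcardeq.trans hCcardL
  -- L is even
  have hLeven : Even L := by
    by_contra hodd
    exact (not_isAT_of_char hACsub hACne hACeul (by rw [hACcardL]; exact hodd) hchar) hat
  obtain ⟨t, ht⟩ := hLeven
  have hm1 : 1 ≤ t - 1 := by omega
  set m := t - 1 with hmdef
  have hL2 : L = 2 * m + 2 := by omega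
  refine ⟨m, hm1, ?_⟩
  -- construct the isomorphism
  set φ : Fin (2*m+2) → ↥((C : Finset V) : Set V) :=
    fun k => ⟨g^[(k : Fin (2*m+2)).val] v0, Finset.mem_coe.mpr (hCiter v0 hv0C k.val)⟩
    with hφdef
  have hφinj : Function.Injective φ := by
    intro k l h
    have hval : g^[k.val] v0 = g^[l.val] v0 := congrArg Subtype.val h
    have hkL : k.val < L := by rw [hL2]; exact k.isLt
    have hlL : l.val < L := by rw [hL2]; exact l.isLt
    exact Fin.ext (hinj_lt k.val l.val hkL hlL hval)
  have hφsurj : Function.Surjective φ := by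
    rintro ⟨w, hw⟩
    obtain ⟨k, hkL, hke⟩ := horbit w (Finset.mem_coe.mp hw)
    exact ⟨⟨k, by omega⟩, Subtype.ext hke⟩
  have hsucc_fin : ∀ k : Fin (2*m+2),
      g^[((k + 1 : Fin (2*m+2))).val] v0 = g (g^[k.val] v0) := by
    intro k
    rw [Fin.val_add, Fin.val_one]
    by_cases h : k.val + 1 < 2*m+2
    · rw [Nat.mod_eq_of_lt h, Function.iterate_succ_apply']
    · have hk1 : k.val + 1 = 2*m+2 := by have := k.isLt; omega
      rw [hk1, Nat.mod_self]
      have hfull : g^[k.val + 1] v0 = v0 := by rw [hk1, ← hL2]; exact hLper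
      rw [← Function.iterate_succ_apply' g k.val v0, hfull]
      simp
  have hadj_orb : ∀ u : V, u ∈ C → G.Adj u (g u) := by
    intro u hu
    exact hA.1 _ (hACsub (hgC u hu).1)
  have hadjiff : ∀ k l : Fin (2*m+2),
      (G.induce ↑(C : Finset V)).Adj (φ k) (φ l) ↔
        (SimpleGraph.cycleGraph (2*m+2)).Adj k l := by
    intro k l
    constructor
    · intro h
      have h' : G.Adj (g^[k.val] v0) (g^[l.val] v0) := h
      rw [SimpleGraph.cycleGraph_adj]
      rcases hadj_g _ _ h' with hg' | hg'
      · rw [← hsucc_fin k] at hg'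
        have hkL : (k+1 : Fin (2*m+2)).val < L := by rw [hL2]; exact (k+1).isLt
        have hlL : l.val < L := by rw [hL2]; exact l.isLt
        have : (k + 1 : Fin (2*m+2)) = l := Fin.ext (hinj_lt _ _ hkL hlL hg')
        right
        rw [← this]
        ring
      · rw [← hsucc_fin l] at hg'
        have hlL : (l+1 : Fin (2*m+2)).val < L := by rw [hL2]; exact (l+1).isLt
        have hkL : k.val < L := by rw [hL2]; exact k.isLt
        have : (l + 1 : Fin (2*m+2)) = k := Fin.ext (hinj_lt _ _ hlL hkL hg')
        left
        rw [← this]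
        ring
    · intro h
      rw [SimpleGraph.cycleGraph_adj] at h
      show G.Adj (g^[k.val] v0) (g^[l.val] v0)
      rcases h with h | h
      · have hk : k = l + 1 := by linear_combination h
        rw [hk, hsucc_fin l]
        exact (hadj_orb _ (hCiter v0 hv0C l.val)).symm
      · have hl : l = k + 1 := by linear_combination h
        rw [hl, hsucc_fin k]
        exact hadj_orb _ (hCiter v0 hv0C k.val)
  have hbij : Function.Bijective φ := ⟨hφinj, hφsurj⟩
  have iso : SimpleGraph.cycleGraph (2*m+2) ≃g G.induce ↑(C : Finset V) :=
    { toEquiv := Equiv.ofBijective φ hbij, map_rel_iff' := fun {a b} => hadjiff a b }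
  exact ⟨iso.symm⟩

end Forward

/-- for a connected simple graph `G` with at least one edge,
`AT(G) = 2` iff the core of `G` is `K₁` or an even cycle `C_{2m+2}`, `m ≥ 1`. -/
theorem stmt0 {V : Type*} [Fintype V] [DecidableEq V] (G : SimpleGraph V)
    (hconn : G.Connected) (hedge : ∃ u v : V, G.Adj u v) :
    alonTarsiNumber G = 2 ↔
      (twoCoreSet G = ∅ ∨
        ∃ m : ℕ, 1 ≤ m ∧
          Nonempty (G.induce ↑(twoCoreSet G) ≃g SimpleGraph.cycleGraph (2 * m + 2))) := by
  constructor
  · intro h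
    rcases Finset.eq_empty_or_nonempty (twoCoreSet G) with hc | hc
    · exact Or.inl hc
    · obtain ⟨A, hor, hat, hle⟩ := (at_eq_two_iff hedge).mp h
      exact Or.inr (forward_cycle hconn hor hat hle hc)
  · rintro (hc | ⟨m, hm, he⟩)
    · exact backward_tree hedge hc
    · exact backward_cycle hedge m hm he
end

section
/- Let l be a positive integer, let G be an arbitrary finite simple graph, and let H be an l-degenerate graph. If l = 1 or l = 2, then the S-sum G +_S H is 2-degenerate; if l ≥ 3, then G +_S H is l-degenerate. -/
open scoped Classical

lemma keylem {V W : Type*} (l : ℕ) (G : SimpleGraph V) (H : SimpleGraph W)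
    (hH : Degenerate l H) : Degenerate (max 2 l) (sSum G H) := by
  intro s hs
  by_cases hcase : ∃ p ∈ s, ∃ e, p.1 = Sum.inr e
  · obtain ⟨p, hp, e, hpe⟩ := hcase
    refine ⟨p, hp, le_trans ?_ (le_max_left 2 l)⟩
    obtain ⟨⟨x, y⟩, hxy⟩ := Quot.exists_rep (e : Sym2 V)
    have hsub : (s.filter fun u => (sSum G H).Adj p u) ⊆
        {(Sum.inl x, p.2), (Sum.inl y, p.2)} := by
      intro q hq
      rw [Finset.mem_filter] at hq
      obtain ⟨hqs, hadj⟩ := hq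
      rw [sSum, fSum, SimpleGraph.fromRel_adj] at hadj
      obtain ⟨hne, hrel⟩ := hadj
      have h2 : q.2 = p.2 ∧ (subdivisionGraph G).Adj p.1 q.1 := by
        rcases hrel with (⟨h1, ⟨u, hu⟩, _⟩ | ⟨h1, h2⟩) | (⟨h1, ⟨u, hu⟩, _⟩ | ⟨h1, h2⟩)
        · rw [hpe] at hu; exact absurd hu (by simp)
        · exact ⟨h1.symm, h2⟩
        · rw [h1, hpe] at hu; exact absurd hu (by simp)
        · exact ⟨h1, h2.symm⟩
      obtain ⟨hq2, hadj'⟩ := h2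
      rw [subdivisionGraph, SimpleGraph.fromRel_adj, hpe] at hadj'
      obtain ⟨_, hrel'⟩ := hadj'
      obtain ⟨u, hqu, hue⟩ : ∃ u, q.1 = Sum.inl u ∧ u ∈ (e : Sym2 V) := by
        rcases hrel' with h | h
        · cases hq1 : q.1 with
          | inl u => rw [hq1] at h; exact absurd h (by simp)
          | inr f => rw [hq1] at h; exact absurd h (by simp)
        · cases hq1 : q.1 with
          | inl u => rw [hq1] at h; exact ⟨u, rfl, h⟩
          | inr f => rw [hq1] at h; exact absurd h (by simp)
      rw [← hxy, Sym2.mem_iff] at hue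
      have : q = (q.1, q.2) := rfl
      rcases hue with h | h
      · simp [Finset.mem_insert, Finset.mem_singleton]
        left; exact Prod.ext (by rw [hqu, h]) hq2
      · simp [Finset.mem_insert, Finset.mem_singleton]
        right; exact Prod.ext (by rw [hqu, h]) hq2
    calc (s.filter fun u => (sSum G H).Adj p u).card
        ≤ ({(Sum.inl x, p.2), (Sum.inl y, p.2)} :
            Finset ((V ⊕ ↥G.edgeSet) × W)).card := Finset.card_le_card hsub
      _ ≤ 2 := by
          apply le_trans (Finset.card_insert_le _ _)
          simp
  · push_neg at hcase
    have hinl : ∀ p ∈ s, ∃ u, p.1 = Sum.inl u := by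
      intro p hp
      cases h : p.1 with
      | inl u => exact ⟨u, rfl⟩
      | inr e => exact absurd h (hcase p hp e)
    obtain ⟨p0, hp0⟩ := hs
    obtain ⟨u0, hu0⟩ := hinl p0 hp0
    set t := (s.filter fun p => p.1 = Sum.inl u0).image Prod.snd with ht
    have htne : t.Nonempty :=
      ⟨p0.2, Finset.mem_image.mpr ⟨p0, Finset.mem_filter.mpr ⟨hp0, hu0⟩, rfl⟩⟩
    obtain ⟨w, hw, hwdeg⟩ := hH t htne
    obtain ⟨p, hpmem, hpw⟩ := Finset.mem_image.mp hw
    rw [Finset.mem_filter] at hpmem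
    have hpe : p = (Sum.inl u0, w) := Prod.ext hpmem.2 hpw
    refine ⟨(Sum.inl u0, w), hpe ▸ hpmem.1, le_trans ?_ (le_max_right 2 l)⟩
    refine le_trans ?_ hwdeg
    apply Finset.card_le_card_of_injOn Prod.snd
    · intro q hq
      rw [Finset.mem_coe, Finset.mem_filter] at hq
      obtain ⟨hqs, hadj⟩ := hq
      obtain ⟨uq, huq⟩ := hinl q hqs
      rw [sSum, fSum, SimpleGraph.fromRel_adj] at hadj
      obtain ⟨hne, hrel⟩ := hadj
      have hKfalse : ¬ (subdivisionGraph G).Adj (Sum.inl u0) (Sum.inl uq) := by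
        simp [subdivisionGraph, SimpleGraph.fromRel_adj]
      have hmain : q.1 = Sum.inl u0 ∧ H.Adj w q.2 := by
        rcases hrel with (⟨h1, _, h3⟩ | ⟨h1, h2⟩) | (⟨h1, _, h3⟩ | ⟨h1, h2⟩)
        · exact ⟨h1.symm, h3⟩
        · rw [huq] at h2; exact absurd h2 hKfalse
        · exact ⟨h1, h3.symm⟩
        · rw [huq] at h2; exact absurd (h2.symm) hKfalse
      rw [Finset.mem_coe, Finset.mem_filter]
      exact ⟨Finset.mem_image.mpr ⟨q, Finset.mem_filter.mpr ⟨hqs, hmain.1⟩, rfl⟩, hmain.2⟩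
    · intro a ha b hb hab
      rw [Finset.mem_coe, Finset.mem_filter] at ha hb
      obtain ⟨ua, hua⟩ := hinl a ha.1
      obtain ⟨ub, hub⟩ := hinl b hb.1
      have hKa : ¬ (subdivisionGraph G).Adj (Sum.inl u0) a.1 := by
        rw [hua]; simp [subdivisionGraph, SimpleGraph.fromRel_adj]
      have hKb : ¬ (subdivisionGraph G).Adj (Sum.inl u0) b.1 := by
        rw [hub]; simp [subdivisionGraph, SimpleGraph.fromRel_adj]
      have ha1 : a.1 = Sum.inl u0 := by
        have := ha.2
        rw [sSum, fSum, SimpleGraph.fromRel_adj] at this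
        rcases this.2 with (⟨h1, _, _⟩ | ⟨_, h2⟩) | (⟨h1, _, _⟩ | ⟨_, h2⟩)
        · exact h1.symm
        · exact absurd h2 hKa
        · exact h1
        · exact absurd h2.symm hKa
      have hb1 : b.1 = Sum.inl u0 := by
        have := hb.2
        rw [sSum, fSum, SimpleGraph.fromRel_adj] at this
        rcases this.2 with (⟨h1, _, _⟩ | ⟨_, h2⟩) | (⟨h1, _, _⟩ | ⟨_, h2⟩)
        · exact h1.symm
        · exact absurd h2 hKb
        · exact h1
        · exact absurd h2.symm hKb
      exact Prod.ext (ha1.trans hb1.symm) hab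

/-- if `H` is `l`-degenerate (`l ≥ 1`) then `G +_S H` is 2-degenerate
when `l = 1` or `l = 2`, and `l`-degenerate when `l ≥ 3`. -/
theorem stmt2 {V W : Type*} [Fintype V] [Fintype W]
    (l : ℕ) (hl : 1 ≤ l) (G : SimpleGraph V) (H : SimpleGraph W)
    (hH : Degenerate l H) :
    ((l = 1 ∨ l = 2) → Degenerate 2 (sSum G H)) ∧
      (3 ≤ l → Degenerate l (sSum G H)) := by
  have hkey := keylem l G H hH
  constructor
  · rintro (rfl | rfl) <;> simpa using hkey
  · intro h3
    have : max 2 l = l := max_eq_right (by omega)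
    rwa [this] at hkey
end

section
/- Let l be a positive integer, let G be an arbitrary finite simple graph, and let H be an l-degenerate graph. Then AT(G +_S H) ≤ 3 if l = 1 or l = 2, and AT(G +_S H) ≤ l + 1 if l ≥ 3. -/
open scoped Classical

/-- A degeneracy ordering: an injective rank function such that every vertex has at
most `l` neighbours of smaller rank. -/
lemma degen_rank {W : Type*} [Fintype W] {l : ℕ} {H : SimpleGraph W}
    (hH : Degenerate l H) :
    ∃ r : W → ℕ, Function.Injective r ∧
      ∀ v : W, ((Finset.univ : Finset W).filter fun u => H.Adj v u ∧ r u < r v).card ≤ l := by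
  have key : ∀ s : Finset W, ∃ r : W → ℕ, (∀ v ∈ s, r v < s.card) ∧
      Set.InjOn r ↑s ∧
      ∀ v ∈ s, (s.filter fun u => H.Adj v u ∧ r u < r v).card ≤ l := by
    intro s
    induction s using Finset.strongInduction with
    | _ s ih =>
      rcases s.eq_empty_or_nonempty with rfl | hs
      · exact ⟨fun _ => 0, by simp, by simp, by simp⟩
      · obtain ⟨v, hv, hdeg⟩ := hH s hs
        obtain ⟨r', h1, h2, h3⟩ := ih (s.erase v) (Finset.erase_ssubset hv)
        have hcarde : (s.erase v).card = s.card - 1 := Finset.card_erase_of_mem hv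
        have hpos : 1 ≤ s.card := Finset.card_pos.2 hs
        refine ⟨fun u => if u = v then s.card - 1 else r' u, ?_, ?_, ?_⟩
        · intro u hu
          by_cases h : u = v
          · subst h; simp only [if_pos rfl, if_true]
            omega
          · simp only [if_neg h]
            have := h1 u (Finset.mem_erase.2 ⟨h, hu⟩)
            omega
        · intro u1 hu1 u2 hu2 heq
          simp only [Finset.mem_coe] at hu1 hu2
          by_cases e1 : u1 = v <;> by_cases e2 : u2 = v
          · rw [e1, e2]
          · exfalso; simp only [if_pos e1, if_neg e2] at heq
            have := h1 u2 (Finset.mem_erase.2 ⟨e2, hu2⟩); omega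
          · exfalso; simp only [if_neg e1, if_pos e2] at heq
            have := h1 u1 (Finset.mem_erase.2 ⟨e1, hu1⟩); omega
          · simp only [if_neg e1, if_neg e2] at heq
            exact h2 (Finset.mem_coe.2 (Finset.mem_erase.2 ⟨e1, hu1⟩))
              (Finset.mem_coe.2 (Finset.mem_erase.2 ⟨e2, hu2⟩)) heq
        · intro w hw
          by_cases hwv : w = v
          · subst hwv
            refine le_trans (Finset.card_le_card ?_) hdeg
            intro u hu
            simp only [Finset.mem_filter] at hu ⊢
            exact ⟨hu.1, hu.2.1⟩
          · refine le_trans (Finset.card_le_card ?_) (h3 w (Finset.mem_erase.2 ⟨hwv, hw⟩))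
            intro u hu
            simp only [Finset.mem_filter, Finset.mem_erase] at hu ⊢
            obtain ⟨hus, hadj, hlt⟩ := hu
            have hwlt : r' w < s.card - 1 := by
              have := h1 w (Finset.mem_erase.2 ⟨hwv, hw⟩); omega
            by_cases huv : u = v
            · exfalso
              simp only [if_pos huv, if_neg hwv] at hlt
              omega
            · simp only [if_neg huv, if_neg hwv] at hlt
              exact ⟨⟨huv, hus⟩, hadj, hlt⟩
  obtain ⟨r, _, h2, h3⟩ := key Finset.univ
  refine ⟨r, ?_, fun v => h3 v (Finset.mem_univ v)⟩
  intro a b hab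
  exact h2 (by simp) (by simp) hab

/-- Main bound: an acyclic orientation of `G +_S H` with outdegrees at most
`max 2 l`, obtained from a degeneracy ordering of `H` and orienting the
subdivision vertices outwards. -/
lemma sSum_AT_bound {V W : Type*} [Fintype V] [Fintype W]
    (l : ℕ) (G : SimpleGraph V) (H : SimpleGraph W) (hH : Degenerate l H) :
    alonTarsiNumber (sSum G H) ≤ max 3 (l + 1) := by
  classical
  obtain ⟨r, hrinj, hrdeg⟩ := degen_rank hH
  set X := (V ⊕ ↥G.edgeSet) × W with hX
  set Good : X × X → Prop := fun p =>
    (p.1.1 = p.2.1 ∧ (∃ u : V, p.1.1 = Sum.inl u) ∧ H.Adj p.1.2 p.2.2 ∧ r p.2.2 < r p.1.2) ∨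
    (p.1.2 = p.2.2 ∧ ∃ e : G.edgeSet, ∃ u : V,
      p.1.1 = Sum.inr e ∧ p.2.1 = Sum.inl u ∧ u ∈ (e : Sym2 V)) with hGoodDef
  set A : Finset (X × X) := Finset.univ.filter Good with hA
  have memA : ∀ p : X × X, p ∈ A ↔ Good p := by
    intro p; simp [hA]
  -- the weight function, strictly decreasing along arcs
  set φ : X → ℕ := fun p => Sum.elim (fun _ => 2 * r p.2) (fun _ => 2 * r p.2 + 1) p.1 with hφ
  have hdec : ∀ p : X × X, Good p → φ p.2 < φ p.1 := by
    rintro p (⟨h1, ⟨u, hu⟩, _, hlt⟩ | ⟨h1, e, u, ha, hb, _⟩)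
    · simp only [hφ]
      rw [← h1, hu]
      simp only [Sum.elim_inl]
      omega
    · simp only [hφ, ha, hb, ← h1, Sum.elim_inl, Sum.elim_inr]
      omega
  -- A is an orientation of sSum G H
  have hor : IsOrientation (sSum G H) A := by
    constructor
    · intro p hp
      rw [memA] at hp
      rw [sSum, fSum, SimpleGraph.fromRel_adj]
      rcases hp with ⟨h1, ⟨u, hu⟩, hadj, hlt⟩ | ⟨h1, e, u, ha, hb, hue⟩
      · refine ⟨?_, Or.inl (Or.inl ⟨h1, ⟨u, hu⟩, hadj⟩)⟩
        intro hcon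
        rw [hcon] at hlt
        omega
      · refine ⟨?_, Or.inl (Or.inr ⟨h1, ?_⟩)⟩
        · intro hcon
          rw [hcon, hb] at ha
          exact absurd ha (by simp)
        · rw [subdivisionGraph, SimpleGraph.fromRel_adj, ha, hb]
          exact ⟨by simp, Or.inr hue⟩
    · intro a b hadj
      rw [memA, memA]
      have hne : a ≠ b := hadj.ne
      -- exactly one of Good (a,b), Good (b,a) holds
      have hone : (Good (a, b) ∧ ¬ Good (b, a)) ∨ (Good (b, a) ∧ ¬ Good (a, b)) := by
        have hnotboth : ¬ (Good (a, b) ∧ Good (b, a)) := by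
          rintro ⟨hab, hba⟩
          rw [hGoodDef] at hab hba
          dsimp only at hab hba
          rcases hab with ⟨h1, ⟨u, hu⟩, _, hlt⟩ | ⟨h1, e, u, ha1, hb1, _⟩ <;>
            rcases hba with ⟨h1', ⟨u', hu'⟩, _, hlt'⟩ | ⟨h1', e', u', ha1', hb1', _⟩
          · omega
          · rw [h1, ha1'] at hu; exact absurd hu (by simp)
          · rw [h1', ha1] at hu'; exact absurd hu' (by simp)
          · rw [hb1] at ha1'; exact absurd ha1' (by simp)
        have hsome : Good (a, b) ∨ Good (b, a) := by
          rw [sSum, fSum, SimpleGraph.fromRel_adj] at hadj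
          obtain ⟨-, hrel⟩ := hadj
          rcases hrel with (⟨h1, ⟨u, hu⟩, hHadj⟩ | ⟨h1, hK⟩) | (⟨h1, ⟨u, hu⟩, hHadj⟩ | ⟨h1, hK⟩)
          · have hne2 : a.2 ≠ b.2 := hHadj.ne
            have : r a.2 ≠ r b.2 := fun h => hne2 (hrinj h)
            rcases Nat.lt_or_ge (r b.2) (r a.2) with h | h
            · exact Or.inl (Or.inl ⟨h1, ⟨u, hu⟩, hHadj, h⟩)
            · exact Or.inr (Or.inl ⟨h1.symm, ⟨u, h1 ▸ hu⟩, hHadj.symm, by show r a.2 < r b.2; omega⟩)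
          · rw [subdivisionGraph, SimpleGraph.fromRel_adj] at hK
            obtain ⟨-, hK⟩ := hK
            match ha1 : a.1, hb1 : b.1 with
            | Sum.inl u, Sum.inr e =>
              rw [ha1, hb1] at hK
              simp only [Sym2.mem_iff, or_false, false_or] at hK
              exact Or.inr (Or.inr ⟨h1.symm, e, u, hb1, ha1, hK⟩)
            | Sum.inr e, Sum.inl u =>
              rw [ha1, hb1] at hK
              simp only [Sym2.mem_iff, or_false, false_or] at hK
              exact Or.inl (Or.inr ⟨h1, e, u, ha1, hb1, hK⟩)
            | Sum.inl u, Sum.inl u' => rw [ha1, hb1] at hK; simp at hK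
            | Sum.inr e, Sum.inr e' => rw [ha1, hb1] at hK; simp at hK
          · have hne2 : a.2 ≠ b.2 := fun h => hHadj.ne h.symm
            have : r a.2 ≠ r b.2 := fun h => hne2 (hrinj h)
            rcases Nat.lt_or_ge (r b.2) (r a.2) with h | h
            · exact Or.inl (Or.inl ⟨h1.symm, ⟨u, h1 ▸ hu⟩, hHadj.symm, h⟩)
            · exact Or.inr (Or.inl ⟨h1, ⟨u, hu⟩, hHadj, by show r a.2 < r b.2; omega⟩)
          · rw [subdivisionGraph, SimpleGraph.fromRel_adj] at hK
            obtain ⟨-, hK⟩ := hK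
            match ha1 : a.1, hb1 : b.1 with
            | Sum.inl u, Sum.inr e =>
              rw [ha1, hb1] at hK
              simp only [Sym2.mem_iff, or_false, false_or] at hK
              exact Or.inr (Or.inr ⟨h1, e, u, hb1, ha1, hK⟩)
            | Sum.inr e, Sum.inl u =>
              rw [ha1, hb1] at hK
              simp only [Sym2.mem_iff, or_false, false_or] at hK
              exact Or.inl (Or.inr ⟨h1.symm, e, u, ha1, hb1, hK⟩)
            | Sum.inl u, Sum.inl u' => rw [ha1, hb1] at hK; simp at hK
            | Sum.inr e, Sum.inr e' => rw [ha1, hb1] at hK; simp at hK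
        rcases hsome with h | h
        · exact Or.inl ⟨h, fun h' => hnotboth ⟨h, h'⟩⟩
        · exact Or.inr ⟨h, fun h' => hnotboth ⟨h', h⟩⟩
      rcases hone with ⟨h1, h2⟩ | ⟨h1, h2⟩
      · exact ⟨fun _ => h2, fun _ => h1⟩
      · exact ⟨fun h => absurd h h2, fun h => absurd h1 h⟩
  -- every Eulerian subdigraph of A is empty
  have heul : ∀ B : Finset (X × X), B ⊆ A → IsEulerianSub B → B = ∅ := by
    intro B hBA hB
    by_contra hne
    obtain ⟨p, hp, hmax⟩ := Finset.exists_max_image B (fun q => φ q.1)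
      (Finset.nonempty_of_ne_empty hne)
    have hout : 0 < arcOutDeg B p.1 := by
      rw [arcOutDeg, Finset.card_pos]
      exact ⟨p, by simp [hp]⟩
    have hin : 0 < arcInDeg B p.1 := by rw [hB p.1]; exact hout
    rw [arcInDeg, Finset.card_pos] at hin
    obtain ⟨q, hq⟩ := hin
    simp only [Finset.mem_filter] at hq
    have hgq : Good q := (memA q).1 (hBA hq.1)
    have := hdec q hgq
    rw [hq.2] at this
    exact absurd (hmax q hq.1) (by omega)
  -- A is an AT orientation
  have hAT : IsATOrientation A := by
    rw [IsATOrientation]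
    have he : (A.powerset.filter fun B => IsEulerianSub B ∧ Even B.card) = {∅} := by
      apply Finset.ext
      intro B
      simp only [Finset.mem_filter, Finset.mem_powerset, Finset.mem_singleton]
      constructor
      · rintro ⟨hBA, hB, -⟩
        exact heul B hBA hB
      · rintro rfl
        refine ⟨Finset.empty_subset A, ?_, by simp⟩
        intro v
        simp [arcInDeg, arcOutDeg]
    have ho : (A.powerset.filter fun B => IsEulerianSub B ∧ ¬ Even B.card) = ∅ := by
      apply Finset.eq_empty_of_forall_notMem
      intro B hB
      simp only [Finset.mem_filter, Finset.mem_powerset] at hB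
      obtain ⟨hBA, hBe, hodd⟩ := hB
      rw [heul B hBA hBe] at hodd
      simp at hodd
    rw [he, ho]
    simp
  -- outdegree bound
  have hdegA : ∀ v : X, arcOutDeg A v ≤ max 2 l := by
    intro v
    obtain ⟨v1, v2⟩ := v
    match v1 with
    | Sum.inl u =>
      refine le_trans (le_trans (Finset.card_le_card_of_injOn (fun p => p.2.2) ?_ ?_)
        (hrdeg v2)) (le_max_right 2 l)
      · intro p hp
        simp only [Finset.mem_coe, Finset.mem_filter] at hp
        obtain ⟨hpA, hp1⟩ := hp
        rw [memA] at hpA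
        rcases hpA with ⟨h1, -, hadj, hlt⟩ | ⟨-, e, u', ha1, -, -⟩
        · rw [hp1] at hadj hlt
          simp only [Finset.mem_coe, Finset.mem_filter, Finset.mem_univ, true_and]
          exact ⟨hadj, hlt⟩
        · rw [hp1] at ha1; exact absurd ha1 (by simp)
      · intro p hp q hq hpq
        simp only [Finset.mem_coe, Finset.mem_filter] at hp hq
        obtain ⟨hpA, hp1⟩ := hp
        obtain ⟨hqA, hq1⟩ := hq
        rw [memA] at hpA hqA
        have hp21 : p.2.1 = Sum.inl u := by
          rcases hpA with ⟨h1, -, -, -⟩ | ⟨-, e, u', ha1, -, -⟩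
          · rw [← h1, hp1]
          · rw [hp1] at ha1; exact absurd ha1 (by simp)
        have hq21 : q.2.1 = Sum.inl u := by
          rcases hqA with ⟨h1, -, -, -⟩ | ⟨-, e, u', ha1, -, -⟩
          · rw [← h1, hq1]
          · rw [hq1] at ha1; exact absurd ha1 (by simp)
        have : p.2 = q.2 := Prod.ext (hp21.trans hq21.symm) hpq
        have : p = q := Prod.ext (hp1.trans hq1.symm) this
        exact this
    | Sum.inr e =>
      obtain ⟨⟨x, y⟩, hxy⟩ := Quot.exists_rep (e : Sym2 V)
      have hc2 : ({Sum.inl x, Sum.inl y} : Finset (V ⊕ ↥G.edgeSet)).card ≤ 2 :=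
        le_trans (Finset.card_insert_le _ _) (by simp)
      refine le_trans (le_trans (Finset.card_le_card_of_injOn
        (t := ({Sum.inl x, Sum.inl y} : Finset (V ⊕ ↥G.edgeSet)))
        (fun p => p.2.1) ?_ ?_) hc2) (le_max_left 2 l)
      · intro p hp
        simp only [Finset.mem_coe, Finset.mem_filter] at hp
        obtain ⟨hpA, hp1⟩ := hp
        rw [memA] at hpA
        rcases hpA with ⟨-, ⟨u', hu'⟩, -, -⟩ | ⟨-, e', u', ha1, hb1, hue⟩
        · rw [hp1] at hu'; exact absurd hu' (by simp)
        · rw [hp1] at ha1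
          have he' : e' = e := by
            have := Sum.inr.inj ha1
            exact this.symm
          rw [he'] at hue
          rw [← hxy] at hue
          have : u' = x ∨ u' = y := Sym2.mem_iff.1 hue
          simp only [Finset.mem_coe, Finset.mem_insert, Finset.mem_singleton, hb1]
          rcases this with h | h
          · exact Or.inl (by rw [h])
          · exact Or.inr (by rw [h])
      · intro p hp q hq hpq
        simp only [Finset.mem_coe, Finset.mem_filter] at hp hq
        obtain ⟨hpA, hp1⟩ := hp
        obtain ⟨hqA, hq1⟩ := hq
        rw [memA] at hpA hqA
        have hp22 : p.2.2 = v2 := by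
          rcases hpA with ⟨-, ⟨u', hu'⟩, -, -⟩ | ⟨h1, -⟩
          · rw [hp1] at hu'; exact absurd hu' (by simp)
          · rw [← h1, hp1]
        have hq22 : q.2.2 = v2 := by
          rcases hqA with ⟨-, ⟨u', hu'⟩, -, -⟩ | ⟨h1, -⟩
          · rw [hq1] at hu'; exact absurd hu' (by simp)
          · rw [← h1, hq1]
        have : p.2 = q.2 := Prod.ext hpq (hp22.trans hq22.symm)
        exact Prod.ext (hp1.trans hq1.symm) this
  -- conclude
  have hmem : max 3 (l + 1) ∈ {k : ℕ | ∃ A : Finset (X × X),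
      IsOrientation (sSum G H) A ∧ IsATOrientation A ∧ ∀ v : X, arcOutDeg A v < k} := by
    refine ⟨A, hor, hAT, fun v => ?_⟩
    have := hdegA v
    have h23 : max 2 l < max 3 (l + 1) := by omega
    omega
  exact Nat.sInf_le hmem

/-- if `H` is `l`-degenerate (`l ≥ 1`) then `AT(G +_S H) ≤ 3` when
`l = 1` or `l = 2`, and `AT(G +_S H) ≤ l + 1` when `l ≥ 3`. -/
theorem stmt3 {V W : Type*} [Fintype V] [Fintype W]
    (l : ℕ) (hl : 1 ≤ l) (G : SimpleGraph V) (H : SimpleGraph W)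
    (hH : Degenerate l H) :
    ((l = 1 ∨ l = 2) → alonTarsiNumber (sSum G H) ≤ 3) ∧
      (3 ≤ l → alonTarsiNumber (sSum G H) ≤ l + 1) := by
  have h := sSum_AT_bound l G H hH
  constructor
  · rintro (rfl | rfl) <;> simpa using h
  · intro h3
    have hm : max 3 (l + 1) = l + 1 := by omega
    rwa [hm] at h
end
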